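/- arXiv:2605.30789 — 3 statements merged into one kernel-verified Lean document; each statement's English description precedes it below -/
import Mathlib

section
/- Let (Ω, P) be a probability space, let M be a measurable event, let B ≥ 0, and let f, g : Ω → ℝ be measurable random variables with |f| ≤ B almost surely and |g| ≤ B almost surely. Suppose there exists a constant c ∈ ℝ such that f = c almost surely on M. Then |E[f·g] − E[f]·E[g]| ≤ 5 · B² · P(Mᶜ). -/
open MeasureTheory

private lemma aux_vanish_bound
    {Ω : Type*} [MeasurableSpace Ω] (μ : Measure Ω) [IsProbabilityMeasure μ]
    (M : Set Ω) (hM : MeasurableSet M)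
    (K : ℝ) (hK : 0 ≤ K) (h : Ω → ℝ) (hmeas : AEStronglyMeasurable h μ)
    (hb : ∀ᵐ ω ∂μ, |h ω| ≤ K) (h0 : ∀ᵐ ω ∂μ, ω ∈ M → h ω = 0) :
    |∫ ω, h ω ∂μ| ≤ K * (μ Mᶜ).toReal := by
  have hint : Integrable h μ := (integrable_const K).mono' hmeas (by simpa using hb)
  have h1 : |∫ ω, h ω ∂μ| ≤ ∫ ω, |h ω| ∂μ := by
    simpa [Real.norm_eq_abs] using norm_integral_le_integral_norm (μ := μ) h
  have h2 : ∫ ω, |h ω| ∂μ ≤ ∫ ω, Mᶜ.indicator (fun _ => K) ω ∂μ := by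
    refine integral_mono_ae hint.abs ((integrable_const K).indicator hM.compl) ?_
    filter_upwards [hb, h0] with ω hbω h0ω
    by_cases hmem : ω ∈ M
    · simp [Set.indicator, hmem, h0ω hmem]
    · simp [Set.indicator, hmem, hbω]
  have h3 : ∫ ω, Mᶜ.indicator (fun _ => K) ω ∂μ = (μ Mᶜ).toReal * K := by
    rw [integral_indicator_const _ hM.compl]; simp [mul_comm, measureReal_def]
  linarith [h1, h2, h3.le, h3.ge]

/-- **Gradient projection covariance (Corollary A.3).**
If `|f| ≤ B` and `|g| ≤ B` a.s. and `f` is a.s. constant on the event `M`, then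
`|Cov(f, g)| = |E[f·g] − E[f]·E[g]| ≤ 5 · B² · P(Mᶜ)`. -/
theorem gradient_projection_covariance_bound
    {Ω : Type*} [MeasurableSpace Ω] (μ : Measure Ω) [IsProbabilityMeasure μ]
    (M : Set Ω) (hM : MeasurableSet M)
    (B : ℝ) (hB : 0 ≤ B)
    (f g : Ω → ℝ) (hf : Measurable f) (hg : Measurable g)
    (hfb : ∀ᵐ ω ∂μ, |f ω| ≤ B) (hgb : ∀ᵐ ω ∂μ, |g ω| ≤ B)
    (c : ℝ) (hconst : ∀ᵐ ω ∂μ, ω ∈ M → f ω = c) :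
    |(∫ ω, f ω * g ω ∂μ) - (∫ ω, f ω ∂μ) * (∫ ω, g ω ∂μ)| ≤ 5 * B ^ 2 * (μ Mᶜ).toReal := by
  have hintf : Integrable f μ := (integrable_const B).mono' hf.aestronglyMeasurable (by simpa using hfb)
  have hintg : Integrable g μ := (integrable_const B).mono' hg.aestronglyMeasurable (by simpa using hgb)
  have hintfg : Integrable (fun ω => f ω * g ω) μ := by
    refine (integrable_const (B * B)).mono' (hf.mul hg).aestronglyMeasurable ?_
    filter_upwards [hfb, hgb] with ω h1 h2
    simp only [Real.norm_eq_abs, abs_mul]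
    exact mul_le_mul h1 h2 (abs_nonneg _) hB
  -- basic integral bounds
  have hEf : |∫ ω, f ω ∂μ| ≤ B := by
    calc |∫ ω, f ω ∂μ| ≤ ∫ ω, |f ω| ∂μ := by
          simpa [Real.norm_eq_abs] using norm_integral_le_integral_norm (μ := μ) f
      _ ≤ ∫ _ω, B ∂μ := integral_mono_ae hintf.abs (integrable_const B) hfb
      _ = B := by simp
  have hEg : |∫ ω, g ω ∂μ| ≤ B := by
    calc |∫ ω, g ω ∂μ| ≤ ∫ ω, |g ω| ∂μ := by
          simpa [Real.norm_eq_abs] using norm_integral_le_integral_norm (μ := μ) g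
      _ ≤ ∫ _ω, B ∂μ := integral_mono_ae hintg.abs (integrable_const B) hgb
      _ = B := by simp
  have hEfg : |∫ ω, f ω * g ω ∂μ| ≤ B * B := by
    calc |∫ ω, f ω * g ω ∂μ| ≤ ∫ ω, |f ω * g ω| ∂μ := by
          simpa only [Real.norm_eq_abs] using norm_integral_le_integral_norm (μ := μ) fun ω => f ω * g ω
      _ ≤ ∫ _ω, B * B ∂μ := by
          refine integral_mono_ae hintfg.abs (integrable_const _) ?_
          filter_upwards [hfb, hgb] with ω h1 h2
          rw [abs_mul]; exact mul_le_mul h1 h2 (abs_nonneg _) hB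
      _ = B * B := by simp
  by_cases hMzero : μ M = 0
  · -- trivial case: μ Mᶜ = 1
    have hMc : (μ Mᶜ).toReal = 1 := by
      have : μ Mᶜ = 1 := by
        have := measure_add_measure_compl (μ := μ) hM
        rw [hMzero, zero_add] at this
        simpa [measure_univ] using this
      simp [this]
    rw [hMc]
    have := abs_sub (∫ ω, f ω * g ω ∂μ) ((∫ ω, f ω ∂μ) * (∫ ω, g ω ∂μ))
    have habs : |(∫ ω, f ω ∂μ) * (∫ ω, g ω ∂μ)| ≤ B * B := by
      rw [abs_mul]; exact mul_le_mul hEf hEg (abs_nonneg _) hB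
    nlinarith [abs_sub_abs_le_abs_sub (∫ ω, f ω * g ω ∂μ) ((∫ ω, f ω ∂μ) * (∫ ω, g ω ∂μ)),
      abs_sub_le (∫ ω, f ω * g ω ∂μ) 0 ((∫ ω, f ω ∂μ) * (∫ ω, g ω ∂μ))]
  · -- |c| ≤ B
    have hcB : |c| ≤ B := by
      have hae : ∀ᵐ ω ∂μ, |f ω| ≤ B ∧ (ω ∈ M → f ω = c) := hfb.and hconst
      obtain ⟨ω, hωM, hω⟩ := MeasureTheory.Measure.exists_mem_of_measure_ne_zero_of_ae hMzero
        (ae_restrict_of_ae hae)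
      rw [← hω.2 hωM]; exact hω.1
    set h := fun ω => f ω - c with hh
    have hhb : ∀ᵐ ω ∂μ, |h ω| ≤ 2 * B := by
      filter_upwards [hfb] with ω h1
      calc |f ω - c| ≤ |f ω| + |c| := abs_sub _ _
        _ ≤ 2 * B := by linarith
    have hh0 : ∀ᵐ ω ∂μ, ω ∈ M → h ω = 0 := by
      filter_upwards [hconst] with ω h1 hm; simp [hh, h1 hm]
    have hhmeas : AEStronglyMeasurable h μ := (hf.sub measurable_const).aestronglyMeasurable
    have hb1 : |∫ ω, h ω ∂μ| ≤ 2 * B * (μ Mᶜ).toReal :=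
      aux_vanish_bound μ M hM (2 * B) (by linarith) h hhmeas hhb hh0
    have hb2 : |∫ ω, h ω * g ω ∂μ| ≤ 2 * B * B * (μ Mᶜ).toReal := by
      refine aux_vanish_bound μ M hM (2 * B * B) (by positivity) _
        ((hhmeas.mul hg.aestronglyMeasurable)) ?_ ?_
      · filter_upwards [hhb, hgb] with ω h1 h2
        rw [abs_mul]
        exact mul_le_mul h1 h2 (abs_nonneg _) (by linarith)
      · filter_upwards [hh0] with ω h1 hm; simp [h1 hm]
    -- algebraic identities
    have hinth : Integrable h μ := hintf.sub (integrable_const c)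
    have hinthg : Integrable (fun ω => h ω * g ω) μ := by
      simpa [hh, sub_mul, Pi.sub_def] using hintfg.sub (hintg.const_mul c)
    have id1 : ∫ ω, h ω ∂μ = (∫ ω, f ω ∂μ) - c := by
      simp [hh, integral_sub hintf (integrable_const c)]
    have id2 : ∫ ω, h ω * g ω ∂μ = (∫ ω, f ω * g ω ∂μ) - c * ∫ ω, g ω ∂μ := by
      have : (fun ω => h ω * g ω) = fun ω => f ω * g ω - c * g ω := by
        funext ω; simp [hh]; ring
      rw [this, integral_sub hintfg (hintg.const_mul c), integral_const_mul]
    have key : (∫ ω, f ω * g ω ∂μ) - (∫ ω, f ω ∂μ) * (∫ ω, g ω ∂μ)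
        = (∫ ω, h ω * g ω ∂μ) - (∫ ω, h ω ∂μ) * (∫ ω, g ω ∂μ) := by
      rw [id1, id2]; ring
    rw [key]
    have tri := abs_sub (∫ ω, h ω * g ω ∂μ) ((∫ ω, h ω ∂μ) * (∫ ω, g ω ∂μ))
    have habs : |(∫ ω, h ω ∂μ) * (∫ ω, g ω ∂μ)| ≤ 2 * B * (μ Mᶜ).toReal * B := by
      rw [abs_mul]
      exact mul_le_mul hb1 hEg (abs_nonneg _) (by positivity)
    have ht : 0 ≤ (μ Mᶜ).toReal := ENNReal.toReal_nonneg
    nlinarith [sq_nonneg B]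
end

section
/- Let (Ω, P) be a probability space, d a natural number, v ∈ ℝ^d a fixed vector, and B ≥ 0. Let z_t, z_s : Ω → ℝ be measurable random variables with |z_t| ≤ B and |z_s| ≤ B almost surely, let H_t, H_s : Ω → Matrix(d, d, ℝ) be measurable random matrices with almost surely bounded entries, and let δ : Ω → ℝ^d be a measurable random vector with almost surely bounded entries such that E[δ_i] = 0 for every coordinate i and δ is independent of the σ-algebra generated by (z_t, z_s, H_t, H_s). Let Σ_{ij} = E[δ_i · δ_j] and set γ = E[vᵀ H_t Σ H_sᵀ v]. Suppose M is a measurable event and there exists a constant c ∈ ℝ with z_t = c almost surely on M. Define z̃_t = z_t + vᵀ H_t δ and z̃_s = z_s + vᵀ H_s δ. Then |Cov(z̃_t, z̃_s)| ≥ γ − 5 · B² · P(Mᶜ). -/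
open MeasureTheory ProbabilityTheory Matrix

instance {m n α : Type*} [MeasurableSpace α] : MeasurableSpace (Matrix m n α) :=
  inferInstanceAs (MeasurableSpace (m → n → α))

/-- Covariance of two real random variables: `Cov(X, Y) = E[X·Y] − E[X]·E[Y]`. -/
noncomputable def cov {Ω : Type*} [MeasurableSpace Ω] (μ : Measure Ω) (X Y : Ω → ℝ) : ℝ :=
  (∫ ω, X ω * Y ω ∂μ) - (∫ ω, X ω ∂μ) * (∫ ω, Y ω ∂μ)

section Aux

variable {Ω : Type*} [MeasurableSpace Ω] {μ : Measure Ω}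

/-- measurable and a.e. bounded -/
def AeBdd (μ : Measure Ω) (f : Ω → ℝ) : Prop :=
  Measurable f ∧ ∃ C : ℝ, ∀ᵐ ω ∂μ, |f ω| ≤ C

namespace AeBdd

lemma const (c : ℝ) : AeBdd μ (fun _ => c) :=
  ⟨measurable_const, ⟨|c|, Filter.Eventually.of_forall fun _ => le_rfl⟩⟩

lemma mul {f g : Ω → ℝ} (hf : AeBdd μ f) (hg : AeBdd μ g) :
    AeBdd μ (fun ω => f ω * g ω) := by
  obtain ⟨hfm, Cf, hCf⟩ := hf
  obtain ⟨hgm, Cg, hCg⟩ := hg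
  refine ⟨hfm.mul hgm, max Cf 0 * max Cg 0, ?_⟩
  filter_upwards [hCf, hCg] with ω h1 h2
  rw [abs_mul]
  exact mul_le_mul (h1.trans (le_max_left _ _)) (h2.trans (le_max_left _ _))
    (abs_nonneg _) (le_max_right _ _)

lemma add {f g : Ω → ℝ} (hf : AeBdd μ f) (hg : AeBdd μ g) :
    AeBdd μ (fun ω => f ω + g ω) := by
  obtain ⟨hfm, Cf, hCf⟩ := hf
  obtain ⟨hgm, Cg, hCg⟩ := hg
  refine ⟨hfm.add hgm, Cf + Cg, ?_⟩
  filter_upwards [hCf, hCg] with ω h1 h2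
  exact (abs_add_le _ _).trans (add_le_add h1 h2)

lemma fintypeSum {ι : Type*} [Fintype ι] (f : ι → Ω → ℝ) (h : ∀ i, AeBdd μ (f i)) :
    AeBdd μ (fun ω => ∑ i, f i ω) := by
  classical
  induction (Finset.univ : Finset ι) using Finset.induction with
  | empty => exact ⟨by simpa using measurable_const, 0, Filter.Eventually.of_forall (by simp)⟩
  | @insert a s ha ih =>
      simp only [Finset.sum_insert ha]
      exact (h a).add ih

lemma finsetSum {ι : Type*} (s : Finset ι) (f : ι → Ω → ℝ) (h : ∀ i ∈ s, AeBdd μ (f i)) :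
    AeBdd μ (fun ω => ∑ i ∈ s, f i ω) := by
  classical
  induction s using Finset.induction with
  | empty => exact ⟨by simpa using measurable_const, 0, Filter.Eventually.of_forall (by simp)⟩
  | @insert a s ha ih =>
      simp only [Finset.sum_insert ha]
      exact (h a (Finset.mem_insert_self _ _)).add
        (ih fun i hi => h i (Finset.mem_insert_of_mem hi))

lemma integrable [IsFiniteMeasure μ] {f : Ω → ℝ} (hf : AeBdd μ f) : Integrable f μ := by
  obtain ⟨hm, C, hC⟩ := hf
  exact (integrable_const C).mono' hm.aestronglyMeasurable
    (by simpa [Real.norm_eq_abs] using hC)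

end AeBdd

lemma integral_fintypeSum [IsFiniteMeasure μ] {ι : Type*} [Fintype ι] (f : ι → Ω → ℝ)
    (h : ∀ i, AeBdd μ (f i)) :
    ∫ ω, ∑ i, f i ω ∂μ = ∑ i, ∫ ω, f i ω ∂μ :=
  integral_finset_sum _ fun i _ => (h i).integrable

lemma integral_sum2 [IsFiniteMeasure μ] {d : ℕ} (T : Fin d → Fin d → Ω → ℝ)
    (h : ∀ i j, AeBdd μ (T i j)) :
    ∫ ω, ∑ i, ∑ j, T i j ω ∂μ = ∑ i, ∑ j, ∫ ω, T i j ω ∂μ := by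
  rw [integral_fintypeSum (fun i => fun ω => ∑ j, T i j ω)
    (fun i => AeBdd.fintypeSum _ (h i))]
  exact Finset.sum_congr rfl fun i _ => integral_fintypeSum _ (h i)

lemma integral_sum4 [IsFiniteMeasure μ] {d : ℕ} (T : Fin d → Fin d → Fin d → Fin d → Ω → ℝ)
    (h : ∀ i j k l, AeBdd μ (T i j k l)) :
    ∫ ω, ∑ i, ∑ j, ∑ k, ∑ l, T i j k l ω ∂μ
      = ∑ i, ∑ j, ∑ k, ∑ l, ∫ ω, T i j k l ω ∂μ := by
  rw [integral_sum2 (fun i j => fun ω => ∑ k, ∑ l, T i j k l ω)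
    (fun i j => AeBdd.fintypeSum _ fun k => AeBdd.fintypeSum _ fun l => h i j k l)]
  exact Finset.sum_congr rfl fun i _ => Finset.sum_congr rfl fun j _ =>
    integral_sum2 _ (h i j)

lemma abs_sub_tri (a b : ℝ) : |a - b| ≤ |a| + |b| := by
  rw [sub_eq_add_neg]
  exact (abs_add_le _ _).trans (by rw [abs_neg])

lemma sum4_reorder {d : ℕ} (F : Fin d → Fin d → Fin d → Fin d → ℝ) :
    (∑ i, ∑ k, ∑ l, ∑ j, F i j k l) = ∑ i, ∑ j, ∑ k, ∑ l, F i j k l := by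
  refine Finset.sum_congr rfl fun i _ => ?_
  calc (∑ k, ∑ l, ∑ j, F i j k l)
      = ∑ k, ∑ j, ∑ l, F i j k l :=
        Finset.sum_congr rfl fun k _ => Finset.sum_comm
    _ = ∑ j, ∑ k, ∑ l, F i j k l := Finset.sum_comm

lemma indep_integral_mul [IsProbabilityMeasure μ] {α β : Type*} [MeasurableSpace α]
    [MeasurableSpace β] {X : Ω → α} {Y : Ω → β} (h : IndepFun X Y μ)
    (hX : Measurable X) (hY : Measurable Y) {f : α → ℝ} {g : β → ℝ}
    (hf : Measurable f) (hg : Measurable g) :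
    ∫ ω, f (X ω) * g (Y ω) ∂μ = (∫ ω, f (X ω) ∂μ) * (∫ ω, g (Y ω) ∂μ) :=
  (h.comp hf hg).integral_mul_eq_mul_integral ((hf.comp hX).aestronglyMeasurable)
    ((hg.comp hY).aestronglyMeasurable)

end Aux

/-- **Policy-level covariance lower bound (Proposition A.4).**
With `z̃_t = z_t + vᵀ H_t δ` and `z̃_s = z_s + vᵀ H_s δ`, where the zero-mean perturbation `δ`
is independent of `(z_t, z_s, H_t, H_s)`, `|z_t| ≤ B`, `|z_s| ≤ B` a.s., `z_t` is a.s. constant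
on the event `M`, and `γ = E[vᵀ H_t Σ H_sᵀ v]`, we have
`|Cov(z̃_t, z̃_s)| ≥ γ − 5·B²·P(Mᶜ)`. -/
theorem policy_level_covariance_lower_bound
    {Ω : Type*} [MeasurableSpace Ω] (μ : Measure Ω) [IsProbabilityMeasure μ]
    (d : ℕ) (v : Fin d → ℝ) (B : ℝ) (hB : 0 ≤ B)
    (zt zs : Ω → ℝ) (hzt : Measurable zt) (hzs : Measurable zs)
    (hztb : ∀ᵐ ω ∂μ, |zt ω| ≤ B) (hzsb : ∀ᵐ ω ∂μ, |zs ω| ≤ B)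
    (Ht Hs : Ω → Matrix (Fin d) (Fin d) ℝ) (hHt : Measurable Ht) (hHs : Measurable Hs)
    (hHtb : ∃ C : ℝ, ∀ᵐ ω ∂μ, ∀ i j, |Ht ω i j| ≤ C)
    (hHsb : ∃ C : ℝ, ∀ᵐ ω ∂μ, ∀ i j, |Hs ω i j| ≤ C)
    (δ : Ω → Fin d → ℝ) (hδ : Measurable δ)
    (hδb : ∃ C : ℝ, ∀ᵐ ω ∂μ, ∀ i, |δ ω i| ≤ C)
    (hδmean : ∀ i, (∫ ω, δ ω i ∂μ) = 0)
    (hindep : IndepFun δ (fun ω => (zt ω, zs ω, Ht ω, Hs ω)) μ)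
    (Sig : Matrix (Fin d) (Fin d) ℝ) (hSig : ∀ i j, Sig i j = ∫ ω, δ ω i * δ ω j ∂μ)
    (γ : ℝ) (hγ : γ = ∫ ω, v ⬝ᵥ (Ht ω * Sig * (Hs ω)ᵀ).mulVec v ∂μ)
    (M : Set Ω) (hM : MeasurableSet M)
    (c : ℝ) (hconst : ∀ᵐ ω ∂μ, ω ∈ M → zt ω = c) :
    |cov μ (fun ω => zt ω + v ⬝ᵥ (Ht ω).mulVec (δ ω))
           (fun ω => zs ω + v ⬝ᵥ (Hs ω).mulVec (δ ω))|
      ≥ γ - 5 * B ^ 2 * (μ Mᶜ).toReal := by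
  classical
  obtain ⟨C1, hHtb⟩ := hHtb
  obtain ⟨C2, hHsb⟩ := hHsb
  obtain ⟨C3, hδb⟩ := hδb
  -- basic measurability
  have hHtm : ∀ i j, Measurable (fun ω => Ht ω i j) := fun i j =>
    (measurable_pi_apply j).comp ((measurable_pi_apply i).comp hHt)
  have hHsm : ∀ i j, Measurable (fun ω => Hs ω i j) := fun i j =>
    (measurable_pi_apply j).comp ((measurable_pi_apply i).comp hHs)
  have hδm : ∀ i, Measurable (fun ω => δ ω i) := fun i => (measurable_pi_apply i).comp hδ
  have hW : Measurable (fun ω => (zt ω, zs ω, Ht ω, Hs ω)) :=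
    hzt.prodMk (hzs.prodMk (hHt.prodMk hHs))
  -- AeBdd atoms
  have bzt : AeBdd μ zt := ⟨hzt, B, hztb⟩
  have bzs : AeBdd μ zs := ⟨hzs, B, hzsb⟩
  have bHt : ∀ i j, AeBdd μ (fun ω => Ht ω i j) := fun i j =>
    ⟨hHtm i j, C1, by filter_upwards [hHtb] with ω h using h i j⟩
  have bHs : ∀ i j, AeBdd μ (fun ω => Hs ω i j) := fun i j =>
    ⟨hHsm i j, C2, by filter_upwards [hHsb] with ω h using h i j⟩
  have bδ : ∀ i, AeBdd μ (fun ω => δ ω i) := fun i =>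
    ⟨hδm i, C3, by filter_upwards [hδb] with ω h using h i⟩
  -- the perturbation terms
  set At : Ω → ℝ := fun ω => v ⬝ᵥ (Ht ω).mulVec (δ ω) with hAtdef
  set As : Ω → ℝ := fun ω => v ⬝ᵥ (Hs ω).mulVec (δ ω) with hAsdef
  have hAt : ∀ ω, At ω = ∑ i, ∑ j, v i * Ht ω i j * δ ω j := by
    intro ω
    simp [hAtdef, dotProduct, mulVec, Finset.mul_sum, mul_assoc]
  have hAs : ∀ ω, As ω = ∑ i, ∑ j, v i * Hs ω i j * δ ω j := by
    intro ω
    simp [hAsdef, dotProduct, mulVec, Finset.mul_sum, mul_assoc]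
  have bAt : AeBdd μ At := by
    have : At = fun ω => ∑ i, ∑ j, v i * Ht ω i j * δ ω j := funext hAt
    rw [this]
    exact AeBdd.fintypeSum _ fun i => AeBdd.fintypeSum _ fun j =>
      ((AeBdd.const (v i)).mul (bHt i j)).mul (bδ j)
  have bAs : AeBdd μ As := by
    have : As = fun ω => ∑ i, ∑ j, v i * Hs ω i j * δ ω j := funext hAs
    rw [this]
    exact AeBdd.fintypeSum _ fun i => AeBdd.fintypeSum _ fun j =>
      ((AeBdd.const (v i)).mul (bHs i j)).mul (bδ j)
  -- key independence identity
  have key : ∀ (f : ℝ × ℝ × Matrix (Fin d) (Fin d) ℝ × Matrix (Fin d) (Fin d) ℝ → ℝ)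
      (g : (Fin d → ℝ) → ℝ), Measurable f → Measurable g →
      (∫ ω, f (zt ω, zs ω, Ht ω, Hs ω) * g (δ ω) ∂μ)
        = (∫ ω, f (zt ω, zs ω, Ht ω, Hs ω) ∂μ) * (∫ ω, g (δ ω) ∂μ) :=
    fun f g hf hg => indep_integral_mul hindep.symm hW hδ hf hg
  -- measurable projections on the product type
  have mW1 : Measurable (fun w : ℝ × ℝ × Matrix (Fin d) (Fin d) ℝ ×
      Matrix (Fin d) (Fin d) ℝ => w.1) := measurable_fst
  have mW2 : Measurable (fun w : ℝ × ℝ × Matrix (Fin d) (Fin d) ℝ ×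
      Matrix (Fin d) (Fin d) ℝ => w.2.1) := measurable_fst.comp measurable_snd
  have mW3 : ∀ i j, Measurable (fun w : ℝ × ℝ × Matrix (Fin d) (Fin d) ℝ ×
      Matrix (Fin d) (Fin d) ℝ => w.2.2.1 i j) := fun i j =>
    (measurable_pi_apply j).comp ((measurable_pi_apply i).comp
      (measurable_fst.comp (measurable_snd.comp measurable_snd)))
  have mW4 : ∀ i j, Measurable (fun w : ℝ × ℝ × Matrix (Fin d) (Fin d) ℝ ×
      Matrix (Fin d) (Fin d) ℝ => w.2.2.2 i j) := fun i j =>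
    (measurable_pi_apply j).comp ((measurable_pi_apply i).comp
      (measurable_snd.comp (measurable_snd.comp measurable_snd)))
  -- E[At] = 0 and E[As] = 0
  have e1t : ∀ i j, (∫ ω, v i * Ht ω i j * δ ω j ∂μ) = 0 := by
    intro i j
    have h := key (fun w => v i * w.2.2.1 i j) (fun x => x j)
      (measurable_const.mul (mW3 i j)) (measurable_pi_apply j)
    have h' : (∫ ω, v i * Ht ω i j * δ ω j ∂μ)
        = (∫ ω, v i * Ht ω i j ∂μ) * (∫ ω, δ ω j ∂μ) := h
    rw [h', hδmean j, mul_zero]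
  have e1s : ∀ i j, (∫ ω, v i * Hs ω i j * δ ω j ∂μ) = 0 := by
    intro i j
    have h := key (fun w => v i * w.2.2.2 i j) (fun x => x j)
      (measurable_const.mul (mW4 i j)) (measurable_pi_apply j)
    have h' : (∫ ω, v i * Hs ω i j * δ ω j ∂μ)
        = (∫ ω, v i * Hs ω i j ∂μ) * (∫ ω, δ ω j ∂μ) := h
    rw [h', hδmean j, mul_zero]
  have EAt : (∫ ω, At ω ∂μ) = 0 := by
    simp only [hAt]
    rw [integral_sum2 _ (fun i j => ((AeBdd.const (v i)).mul (bHt i j)).mul (bδ j))]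
    simp [e1t]
  have EAs : (∫ ω, As ω ∂μ) = 0 := by
    simp only [hAs]
    rw [integral_sum2 _ (fun i j => ((AeBdd.const (v i)).mul (bHs i j)).mul (bδ j))]
    simp [e1s]
  -- E[zt * As] = 0
  have I2 : (∫ ω, zt ω * As ω ∂μ) = 0 := by
    have hpt : ∀ ω, zt ω * As ω = ∑ k, ∑ l, (v k * zt ω * Hs ω k l) * δ ω l := by
      intro ω
      rw [hAs ω, Finset.mul_sum]
      refine Finset.sum_congr rfl fun k _ => ?_
      rw [Finset.mul_sum]
      exact Finset.sum_congr rfl fun l _ => by ring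
    simp only [hpt]
    rw [integral_sum2 _ (fun k l =>
      (((AeBdd.const (v k)).mul bzt).mul (bHs k l)).mul (bδ l))]
    have e2 : ∀ k l, (∫ ω, (v k * zt ω * Hs ω k l) * δ ω l ∂μ) = 0 := by
      intro k l
      have h := key (fun w => v k * w.1 * w.2.2.2 k l) (fun x => x l)
        ((measurable_const.mul mW1).mul (mW4 k l)) (measurable_pi_apply l)
      have h' : (∫ ω, (v k * zt ω * Hs ω k l) * δ ω l ∂μ)
          = (∫ ω, v k * zt ω * Hs ω k l ∂μ) * (∫ ω, δ ω l ∂μ) := h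
      rw [h', hδmean l, mul_zero]
    simp [e2]
  -- E[At * zs] = 0
  have I3 : (∫ ω, At ω * zs ω ∂μ) = 0 := by
    have hpt : ∀ ω, At ω * zs ω = ∑ i, ∑ j, (v i * zs ω * Ht ω i j) * δ ω j := by
      intro ω
      rw [hAt ω, Finset.sum_mul]
      refine Finset.sum_congr rfl fun i _ => ?_
      rw [Finset.sum_mul]
      exact Finset.sum_congr rfl fun j _ => by ring
    simp only [hpt]
    rw [integral_sum2 _ (fun i j =>
      (((AeBdd.const (v i)).mul bzs).mul (bHt i j)).mul (bδ j))]
    have e3 : ∀ i j, (∫ ω, (v i * zs ω * Ht ω i j) * δ ω j ∂μ) = 0 := by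
      intro i j
      have h := key (fun w => v i * w.2.1 * w.2.2.1 i j) (fun x => x j)
        ((measurable_const.mul mW2).mul (mW3 i j)) (measurable_pi_apply j)
      have h' : (∫ ω, (v i * zs ω * Ht ω i j) * δ ω j ∂μ)
          = (∫ ω, v i * zs ω * Ht ω i j ∂μ) * (∫ ω, δ ω j ∂μ) := h
      rw [h', hδmean j, mul_zero]
    simp [e3]
  -- E[At * As] = γ
  have I4 : (∫ ω, At ω * As ω ∂μ) = γ := by
    have hpt : ∀ ω, At ω * As ω
        = ∑ i, ∑ j, ∑ k, ∑ l, (v i * v k * Ht ω i j * Hs ω k l) * (δ ω j * δ ω l) := by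
      intro ω
      rw [hAt ω, hAs ω, Finset.sum_mul]
      refine Finset.sum_congr rfl fun i _ => ?_
      rw [Finset.sum_mul]
      refine Finset.sum_congr rfl fun j _ => ?_
      rw [Finset.mul_sum]
      refine Finset.sum_congr rfl fun k _ => ?_
      rw [Finset.mul_sum]
      exact Finset.sum_congr rfl fun l _ => by ring
    have hbd : ∀ i j k l,
        AeBdd μ (fun ω => (v i * v k * Ht ω i j * Hs ω k l) * (δ ω j * δ ω l)) :=
      fun i j k l => (((AeBdd.const (v i * v k)).mul (bHt i j)).mul (bHs k l)).mul
        ((bδ j).mul (bδ l))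
    have e4 : ∀ i j k l, (∫ ω, (v i * v k * Ht ω i j * Hs ω k l) * (δ ω j * δ ω l) ∂μ)
        = (∫ ω, v i * v k * Ht ω i j * Hs ω k l ∂μ) * Sig j l := by
      intro i j k l
      have h := key (fun w => v i * v k * w.2.2.1 i j * w.2.2.2 k l) (fun x => x j * x l)
        ((measurable_const.mul (mW3 i j)).mul (mW4 k l))
        ((measurable_pi_apply j).mul (measurable_pi_apply l))
      have h' : (∫ ω, (v i * v k * Ht ω i j * Hs ω k l) * (δ ω j * δ ω l) ∂μ)
          = (∫ ω, v i * v k * Ht ω i j * Hs ω k l ∂μ) * (∫ ω, δ ω j * δ ω l ∂μ) := h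
      rw [h', ← hSig j l]
    have hγpt : ∀ ω, v ⬝ᵥ (Ht ω * Sig * (Hs ω)ᵀ).mulVec v
        = ∑ i, ∑ k, ∑ l, ∑ j, (v i * v k * Ht ω i j * Hs ω k l) * Sig j l := by
      intro ω
      simp only [dotProduct, mulVec, Matrix.mul_apply, transpose_apply,
        Finset.mul_sum, Finset.sum_mul]
      exact Finset.sum_congr rfl fun i _ => Finset.sum_congr rfl fun k _ =>
        Finset.sum_congr rfl fun l _ => Finset.sum_congr rfl fun j _ => by ring
    calc (∫ ω, At ω * As ω ∂μ)
        = ∑ i, ∑ j, ∑ k, ∑ l,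
            ∫ ω, (v i * v k * Ht ω i j * Hs ω k l) * (δ ω j * δ ω l) ∂μ := by
          simp only [hpt]
          exact integral_sum4 _ hbd
      _ = ∑ i, ∑ j, ∑ k, ∑ l,
            (∫ ω, v i * v k * Ht ω i j * Hs ω k l ∂μ) * Sig j l := by
          exact Finset.sum_congr rfl fun i _ => Finset.sum_congr rfl fun j _ =>
            Finset.sum_congr rfl fun k _ => Finset.sum_congr rfl fun l _ => e4 i j k l
      _ = γ := by
          rw [hγ]
          simp only [hγpt]
          rw [integral_sum4 (fun i k l j => fun ω =>
            (v i * v k * Ht ω i j * Hs ω k l) * Sig j l)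
            (fun i k l j => ((((AeBdd.const (v i * v k)).mul (bHt i j)).mul
              (bHs k l))).mul (AeBdd.const (Sig j l)))]
          simp only [MeasureTheory.integral_mul_const]
          exact (sum4_reorder fun i j k l =>
            (∫ ω, v i * v k * Ht ω i j * Hs ω k l ∂μ) * Sig j l).symm
  -- covariance decomposition
  have hcov : cov μ (fun ω => zt ω + At ω) (fun ω => zs ω + As ω)
      = cov μ zt zs + γ := by
    have hpt : (fun ω => (zt ω + At ω) * (zs ω + As ω))
        = fun ω => zt ω * zs ω + zt ω * As ω + At ω * zs ω + At ω * As ω :=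
      funext fun ω => by ring
    have iztzs := (bzt.mul bzs).integrable
    have iztAs := (bzt.mul bAs).integrable
    have iAtzs := (bAt.mul bzs).integrable
    have iAtAs := (bAt.mul bAs).integrable
    have iA : Integrable (fun ω => zt ω * zs ω + zt ω * As ω) μ := iztzs.add iztAs
    have iB : Integrable (fun ω => zt ω * zs ω + zt ω * As ω + At ω * zs ω) μ :=
      iA.add iAtzs
    unfold cov
    rw [hpt]
    rw [integral_add iB iAtAs, integral_add iA iAtzs, integral_add iztzs iztAs,
      integral_add bzt.integrable bAt.integrable,
      integral_add bzs.integrable bAs.integrable,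
      I2, I3, I4, EAt, EAs]
    ring
  -- bound on |cov zt zs|
  obtain ⟨c', hc'B, hc'⟩ : ∃ c', |c'| ≤ B ∧ ∀ᵐ ω ∂μ, ω ∈ M → zt ω = c' := by
    by_cases hM0 : μ M = 0
    · refine ⟨0, by simpa using hB, ?_⟩
      have hnm : ∀ᵐ ω ∂μ, ω ∉ M := by
        rw [ae_iff]
        simpa [not_not] using hM0
      filter_upwards [hnm] with ω h1 h2
      exact absurd h2 h1
    · have hfreq : ∃ᵐ ω ∂μ, ω ∈ M := MeasureTheory.frequently_ae_mem_iff.mpr hM0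
      obtain ⟨ω0, h1, h2, h3⟩ := (hfreq.and_eventually (hconst.and hztb)).exists
      exact ⟨c, by rw [← h2 h1]; exact h3, hconst⟩
  have hPnn : (0:ℝ) ≤ (μ Mᶜ).toReal := ENNReal.toReal_nonneg
  -- u = zt - c'
  have bu : AeBdd μ (fun ω => zt ω - c') :=
    ⟨hzt.sub measurable_const, B + |c'|, by
      filter_upwards [hztb] with ω h
      exact (abs_sub_tri _ _).trans (add_le_add h le_rfl)⟩
  have covid : cov μ zt zs = (∫ ω, (zt ω - c') * zs ω ∂μ)
      - (∫ ω, zt ω - c' ∂μ) * ∫ ω, zs ω ∂μ := by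
    unfold cov
    have h1 : (∫ ω, (zt ω - c') * zs ω ∂μ)
        = (∫ ω, zt ω * zs ω ∂μ) - c' * ∫ ω, zs ω ∂μ := by
      have : (fun ω => (zt ω - c') * zs ω)
          = fun ω => zt ω * zs ω - c' * zs ω := funext fun ω => by ring
      rw [this, integral_sub (bzt.mul bzs).integrable
        ((AeBdd.const c').mul bzs).integrable, MeasureTheory.integral_const_mul]
    have h2 : (∫ ω, zt ω - c' ∂μ) = (∫ ω, zt ω ∂μ) - c' := by
      rw [integral_sub bzt.integrable (integrable_const c')]
      simp
    rw [h1, h2]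
    ring
  -- indicator bounds
  have hind : ∀ (D : ℝ) (f : Ω → ℝ), AeBdd μ f → (0 ≤ D) →
      (∀ᵐ ω ∂μ, ω ∈ M → f ω = 0) → (∀ᵐ ω ∂μ, |f ω| ≤ D) →
      |∫ ω, f ω ∂μ| ≤ D * (μ Mᶜ).toReal := by
    intro D f bf hD hfM hfD
    have h1 : |∫ ω, f ω ∂μ| ≤ ∫ ω, |f ω| ∂μ := by
      simpa [Real.norm_eq_abs] using norm_integral_le_integral_norm (μ := μ) f
    have h2 : (∫ ω, |f ω| ∂μ) ≤ ∫ ω, Mᶜ.indicator (fun _ => D) ω ∂μ := by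
      refine integral_mono_ae bf.integrable.abs
        ((integrable_const D).indicator hM.compl) ?_
      filter_upwards [hfM, hfD] with ω hm hd
      by_cases hω : ω ∈ M
      · have hω' : ω ∉ Mᶜ := by simp [hω]
        simp [hm hω, Set.indicator_of_notMem hω']
      · have hω' : ω ∈ Mᶜ := hω
        simpa [Set.indicator_of_mem hω'] using hd
    have h3 : (∫ ω, Mᶜ.indicator (fun _ => D) ω ∂μ) = (μ Mᶜ).toReal * D := by
      rw [integral_indicator_const D hM.compl]
      simp [smul_eq_mul, measureReal_def]
    calc |∫ ω, f ω ∂μ| ≤ ∫ ω, Mᶜ.indicator (fun _ => D) ω ∂μ := h1.trans h2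
      _ = D * (μ Mᶜ).toReal := by rw [h3]; ring
  have hb1 : |∫ ω, (zt ω - c') * zs ω ∂μ| ≤ (2 * B ^ 2) * (μ Mᶜ).toReal := by
    refine hind _ _ (bu.mul bzs) (by positivity) ?_ ?_
    · filter_upwards [hc'] with ω h hm
      rw [h hm]
      ring
    · filter_upwards [hztb, hzsb, hc'] with ω h1 h2 _
      rw [abs_mul]
      calc |zt ω - c'| * |zs ω| ≤ (B + B) * B := by
            exact mul_le_mul ((abs_sub_tri _ _).trans (add_le_add h1 hc'B)) h2
              (abs_nonneg _) (by linarith)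
        _ = 2 * B ^ 2 := by ring
  have hb2 : |∫ ω, zt ω - c' ∂μ| ≤ (2 * B) * (μ Mᶜ).toReal := by
    refine hind _ _ bu (by linarith) ?_ ?_
    · filter_upwards [hc'] with ω h hm
      rw [h hm]
      ring
    · filter_upwards [hztb, hc'] with ω h1 _
      calc |zt ω - c'| ≤ |zt ω| + |c'| := abs_sub_tri _ _
        _ ≤ B + B := add_le_add h1 hc'B
        _ = 2 * B := by ring
  have hb3 : |∫ ω, zs ω ∂μ| ≤ B := by
    have h1 : |∫ ω, zs ω ∂μ| ≤ ∫ ω, |zs ω| ∂μ := by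
      simpa [Real.norm_eq_abs] using norm_integral_le_integral_norm (μ := μ) zs
    have h2 : (∫ ω, |zs ω| ∂μ) ≤ ∫ ω, B ∂μ :=
      integral_mono_ae bzs.integrable.abs (integrable_const B) hzsb
    have h3 : (∫ ω, B ∂μ) = B := by simp
    linarith
  have hcovb : |cov μ zt zs| ≤ 4 * B ^ 2 * (μ Mᶜ).toReal := by
    rw [covid]
    have tri : |(∫ ω, (zt ω - c') * zs ω ∂μ)
        - (∫ ω, zt ω - c' ∂μ) * ∫ ω, zs ω ∂μ|
        ≤ |∫ ω, (zt ω - c') * zs ω ∂μ| + |(∫ ω, zt ω - c' ∂μ) * ∫ ω, zs ω ∂μ| :=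
      abs_sub_tri _ _
    have hmul : |(∫ ω, zt ω - c' ∂μ) * ∫ ω, zs ω ∂μ|
        ≤ ((2 * B) * (μ Mᶜ).toReal) * B := by
      rw [abs_mul]
      exact mul_le_mul hb2 hb3 (abs_nonneg _) (by positivity)
    nlinarith [abs_nonneg (∫ ω, (zt ω - c') * zs ω ∂μ)]
  -- conclusion
  rw [hcov]
  have habs : γ - |cov μ zt zs| ≤ |cov μ zt zs + γ| := by
    have h1 : |γ| ≤ |cov μ zt zs + γ| + |cov μ zt zs| := by
      calc |γ| = |(cov μ zt zs + γ) + (-(cov μ zt zs))| := by ring_nf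
        _ ≤ |cov μ zt zs + γ| + |(-(cov μ zt zs))| := abs_add_le _ _
        _ = |cov μ zt zs + γ| + |cov μ zt zs| := by rw [abs_neg]
    linarith [le_abs_self γ]
  have hB2P : (0:ℝ) ≤ B ^ 2 * (μ Mᶜ).toReal := by positivity
  linarith
end

section
/- Let A be a nonempty finite type, let l : A → ℝ, and let μ be the standard Gumbel probability measure on ℝ, i.e., the measure with density x ↦ exp(−x − exp(−x)) with respect to Lebesgue measure. Let P be the product measure ⊗_{a ∈ A} μ on (A → ℝ), and fix a₀ ∈ A. Then P({G : A → ℝ | ∀ a ≠ a₀, l(a₀) + G(a₀) > l(a) + G(a)}) = exp(l(a₀)) / ∑_{a ∈ A} exp(l(a)). -/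
open MeasureTheory

/-- The standard Gumbel probability measure on `ℝ`: the measure with Lebesgue density
`x ↦ exp(−x − exp(−x))`. -/
noncomputable def gumbelMeasure : Measure ℝ :=
  (volume : Measure ℝ).withDensity fun x => ENNReal.ofReal (Real.exp (-x - Real.exp (-x)))

instance : SigmaFinite gumbelMeasure :=
  SigmaFinite.withDensity_of_ne_top (ae_of_all _ fun _ => ENNReal.ofReal_ne_top)

open Real Filter Set Topology


lemma gumbel_hasDeriv (c : ℝ) (hc : c ≠ 0) (x : ℝ) :
    HasDerivAt (fun x => Real.exp (-(c * Real.exp (-x))) / c)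
      (Real.exp (-x - c * Real.exp (-x))) x := by
  have h1 : HasDerivAt (fun x : ℝ => -(c * Real.exp (-x))) (c * Real.exp (-x)) x := by
    have := ((Real.hasDerivAt_exp (-x)).comp x (hasDerivAt_neg x)).const_mul c
    simpa using this.fun_neg
  have h2 := (h1.exp).div_const c
  refine h2.congr_deriv ?_
  rw [sub_eq_add_neg, Real.exp_add]
  field_simp

lemma gumbel_tendsto_top (c : ℝ) (hc : 0 < c) :
    Tendsto (fun x => Real.exp (-(c * Real.exp (-x))) / c) atTop (𝓝 (1 / c)) := by
  have h : Tendsto (fun x : ℝ => -(c * Real.exp (-x))) atTop (𝓝 0) := by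
    have := (Real.tendsto_exp_neg_atTop_nhds_zero).const_mul c
    simpa using this.neg
  have := (Real.continuous_exp.continuousAt.tendsto.comp h).div_const c
  simpa using this

lemma gumbel_tendsto_bot (c : ℝ) (hc : 0 < c) :
    Tendsto (fun x => Real.exp (-(c * Real.exp (-x))) / c) atBot (𝓝 0) := by
  have h : Tendsto (fun x : ℝ => -(c * Real.exp (-x))) atBot atBot := by
    have h1 : Tendsto (fun x : ℝ => Real.exp (-x)) atBot atTop :=
      Real.tendsto_exp_atTop.comp tendsto_neg_atBot_atTop
    exact tendsto_neg_atBot_iff.mpr (h1.const_mul_atTop hc)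
  have := (Real.tendsto_exp_atBot.comp h).div_const c
  simpa using this

lemma gumbel_integrable (c : ℝ) (hc : 0 < c) :
    Integrable (fun x : ℝ => Real.exp (-x - c * Real.exp (-x))) := by
  have hpos : ∀ x : ℝ, 0 ≤ Real.exp (-x - c * Real.exp (-x)) := fun x => (Real.exp_pos _).le
  -- integrable on Ioi 0
  have hIoi : IntegrableOn (fun x : ℝ => Real.exp (-x - c * Real.exp (-x))) (Ioi 0) :=
    integrableOn_Ioi_deriv_of_nonneg' (fun x _ => gumbel_hasDeriv c hc.ne' x)
      (fun x _ => hpos x) ((gumbel_tendsto_top c hc))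
  -- reflection for Iio
  have hrefl : ∀ y : ℝ, Real.exp (-(-y) - c * Real.exp (-(-y))) = Real.exp (y - c * Real.exp y) := by
    intro y; simp
  have hG : ∀ y : ℝ, HasDerivAt (fun y => -(Real.exp (-(c * Real.exp y)) / c))
      (Real.exp (y - c * Real.exp y)) y := by
    intro y
    have h1 : HasDerivAt (fun y : ℝ => -(c * Real.exp y)) (-(c * Real.exp y)) y := by
      simpa using ((Real.hasDerivAt_exp y).const_mul c).fun_neg
    have h2 := ((h1.exp).div_const c).neg
    refine h2.congr_deriv ?_
    rw [sub_eq_add_neg, Real.exp_add]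
    field_simp
  have hGtop : Tendsto (fun y => -(Real.exp (-(c * Real.exp y)) / c)) atTop (𝓝 0) := by
    have h : Tendsto (fun y : ℝ => -(c * Real.exp y)) atTop atBot := by
      exact tendsto_neg_atBot_iff.mpr (Real.tendsto_exp_atTop.const_mul_atTop hc)
    have := ((Real.tendsto_exp_atBot.comp h).div_const c).neg
    simpa using this
  have hIoi' : IntegrableOn (fun y : ℝ => Real.exp (y - c * Real.exp y)) (Ioi 0) :=
    integrableOn_Ioi_deriv_of_nonneg' (fun y _ => hG y) (fun x _ => (Real.exp_pos _).le) hGtop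
  have hIio : IntegrableOn (fun x : ℝ => Real.exp (-x - c * Real.exp (-x))) (Iio 0) := by
    have key := (MeasurePreserving.integrableOn_comp_preimage
      (Measure.measurePreserving_neg (volume : Measure ℝ))
      (Homeomorph.neg ℝ).measurableEmbedding
      (f := fun x : ℝ => Real.exp (-x - c * Real.exp (-x))) (s := Iio (0:ℝ)))
    apply key.mp
    have h1 : ((fun x : ℝ => Real.exp (-x - c * Real.exp (-x))) ∘ (Neg.neg : ℝ → ℝ)) =
        fun y : ℝ => Real.exp (y - c * Real.exp y) := by
      funext y; simpa using hrefl y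
    rw [show ((Neg.neg : ℝ → ℝ) ⁻¹' Iio (0:ℝ)) = Ioi (0:ℝ) by ext x; simp, h1]
    exact hIoi'
  rw [← integrableOn_univ, ← Set.Iio_union_Ici (a := (0:ℝ))]
  exact hIio.union (Iff.mpr integrableOn_Ici_iff_integrableOn_Ioi hIoi)

lemma gumbel_integral (c : ℝ) (hc : 0 < c) :
    ∫ x : ℝ, Real.exp (-x - c * Real.exp (-x)) = 1 / c := by
  have := integral_of_hasDerivAt_of_tendsto (fun x => gumbel_hasDeriv c hc.ne' x)
    (gumbel_integrable c hc) (gumbel_tendsto_bot c hc) (gumbel_tendsto_top c hc)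
  simpa using this

lemma gumbel_lintegral (c : ℝ) (hc : 0 < c) :
    ∫⁻ x : ℝ, ENNReal.ofReal (Real.exp (-x - c * Real.exp (-x))) = ENNReal.ofReal (1 / c) := by
  rw [← ofReal_integral_eq_lintegral_ofReal (gumbel_integrable c hc)
    (ae_of_all _ fun x => (Real.exp_pos _).le), gumbel_integral c hc]

lemma gumbel_Iio (t : ℝ) :
    gumbelMeasure (Iio t) = ENNReal.ofReal (Real.exp (-Real.exp (-t))) := by
  rw [gumbelMeasure, withDensity_apply _ measurableSet_Iio]
  have h1 : ∀ x : ℝ, Real.exp (-x - Real.exp (-x)) = Real.exp (-x - 1 * Real.exp (-x)) := by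
    intro x; rw [one_mul]
  have hint : IntegrableOn (fun x : ℝ => Real.exp (-x - Real.exp (-x))) (Iic t) := by
    simp_rw [h1]; exact (gumbel_integrable 1 one_pos).integrableOn
  have h2 : ∫⁻ x in Iio t, ENNReal.ofReal (Real.exp (-x - Real.exp (-x))) ∂volume
      = ∫⁻ x in Iic t, ENNReal.ofReal (Real.exp (-x - Real.exp (-x))) ∂volume := by
    exact setLIntegral_congr Iio_ae_eq_Iic
  rw [h2, ← ofReal_integral_eq_lintegral_ofReal hint (ae_of_all _ fun x => (Real.exp_pos _).le)]
  congr 1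
  have := integral_Iic_of_hasDerivAt_of_tendsto'
    (f := fun x => Real.exp (-(1 * Real.exp (-x))) / 1)
    (fun x _ => gumbel_hasDeriv 1 one_ne_zero x) (by simp_rw [h1] at hint ⊢; exact hint)
    (gumbel_tendsto_bot 1 one_pos)
  simp only [one_mul, div_one] at this
  simp_rw [h1]
  simp only [one_mul] at this ⊢
  rw [this]
  simp

lemma lintegral_pi_point {X : Type*} [u : Unique X] [ft : Fintype X] (x₀ : X)
    (μ : Measure ℝ) [SigmaFinite μ] (F : ℝ → ENNReal) (hF : Measurable F) :
    ∫⁻ f : X → ℝ, F (f x₀)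
        ∂(@Measure.pi X (fun _ => ℝ) ft (fun _ => inferInstance) (fun _ => μ))
      = ∫⁻ x, F x ∂μ := by
  have h : ft = Unique.fintype := Subsingleton.elim _ _
  subst h
  have h2 : x₀ = default := Subsingleton.elim _ _
  subst h2
  exact (measurePreserving_funUnique μ X).lintegral_comp hF

set_option maxHeartbeats 2000000 in
/-- **Gumbel–Max equivalence.**
Adding i.i.d. standard Gumbel noise `G a` to logits `l a` and taking the argmax produces each
outcome `a₀` with exactly its softmax probability `exp(l a₀) / ∑ a, exp(l a)`. -/
theorem gumbel_max_softmax
    {A : Type*} [Fintype A] [Nonempty A]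
    (l : A → ℝ) (a₀ : A) :
    Measure.pi (fun _ : A => gumbelMeasure)
        {G : A → ℝ | ∀ a, a ≠ a₀ → l a₀ + G a₀ > l a + G a}
      = ENNReal.ofReal (Real.exp (l a₀) / ∑ a, Real.exp (l a)) := by
  classical
  haveI : Unique {a : A // a = a₀} := ⟨⟨⟨a₀, rfl⟩⟩, fun b => Subtype.ext b.2⟩
  set p : A → Prop := fun a => a = a₀ with hp
  set S : ℝ := ∑ a : {a : A // ¬ a = a₀}, Real.exp (l a.1 - l a₀) with hS
  have hS0 : 0 ≤ S := Finset.sum_nonneg fun a _ => (Real.exp_pos _).le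
  have hcpos : 0 < 1 + S := by linarith
  -- the set in the product space
  set T : Set (({a : A // a = a₀} → ℝ) × ({a : A // ¬ a = a₀} → ℝ)) :=
    {q | ∀ a : {a : A // ¬ a = a₀}, l a.1 + q.2 a < l a₀ + q.1 ⟨a₀, rfl⟩} with hTdef
  have hT : MeasurableSet T := by
    have : T = ⋂ a : {a : A // ¬ a = a₀},
        {q : ({a : A // a = a₀} → ℝ) × ({a : A // ¬ a = a₀} → ℝ) |
          l a.1 + q.2 a < l a₀ + q.1 ⟨a₀, rfl⟩} := by
      ext q; simp [hTdef, Set.mem_iInter]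
    rw [this]
    exact MeasurableSet.iInter fun a => measurableSet_lt
      (((measurable_pi_apply a).comp measurable_snd).const_add _)
      (((measurable_pi_apply (⟨a₀, rfl⟩ : {a : A // a = a₀})).comp measurable_fst).const_add _)
  have hmp := measurePreserving_piEquivPiSubtypeProd
    (fun _ : A => gumbelMeasure) (fun a : A => a = a₀)
  have hpre : (MeasurableEquiv.piEquivPiSubtypeProd (fun _ : A => ℝ) (fun a : A => a = a₀)) ⁻¹' T
      = {G : A → ℝ | ∀ a, a ≠ a₀ → l a₀ + G a₀ > l a + G a} := by
    ext G
    simp only [Set.mem_preimage, hTdef, Set.mem_setOf_eq,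
      MeasurableEquiv.piEquivPiSubtypeProd, Equiv.piEquivPiSubtypeProd,
      MeasurableEquiv.coe_mk, Equiv.coe_fn_mk]
    constructor
    · intro h a ha; exact h ⟨a, ha⟩
    · intro h a; exact h a.1 a.2
  rw [← hpre, hmp.measure_preimage hT.nullMeasurableSet]
  rw [Measure.prod_apply hT]
  -- compute the inner measure as a product
  have hslice : ∀ f : {a : A // a = a₀} → ℝ,
      (Measure.pi fun _ : {a : A // ¬ a = a₀} => gumbelMeasure) (Prod.mk f ⁻¹' T)
        = ∏ a : {a : A // ¬ a = a₀},
            ENNReal.ofReal (Real.exp (-Real.exp (-(l a₀ + f ⟨a₀, rfl⟩ - l a.1)))) := by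
    intro f
    have : Prod.mk f ⁻¹' T = Set.pi Set.univ
        (fun a : {a : A // ¬ a = a₀} => Iio (l a₀ + f ⟨a₀, rfl⟩ - l a.1)) := by
      ext g
      simp only [Set.mem_preimage, hTdef, Set.mem_setOf_eq, Set.mem_pi, Set.mem_univ,
        true_implies, Set.mem_Iio]
      exact forall_congr' fun a => by constructor <;> intro <;> linarith
    rw [this, Measure.pi_pi]
    exact Finset.prod_congr rfl fun a _ => gumbel_Iio _
  simp only [hslice]
  -- the product simplifies to a single exponential
  have hprod : ∀ x : ℝ,
      (∏ a : {a : A // ¬ a = a₀}, ENNReal.ofReal (Real.exp (-Real.exp (-(l a₀ + x - l a.1)))))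
        = ENNReal.ofReal (Real.exp (-(S * Real.exp (-x)))) := by
    intro x
    rw [← ENNReal.ofReal_prod_of_nonneg fun a _ => (Real.exp_pos _).le]
    congr 1
    rw [← Real.exp_sum]
    congr 1
    rw [hS, Finset.sum_mul, ← Finset.sum_neg_distrib]
    refine Finset.sum_congr rfl fun a _ => ?_
    rw [← Real.exp_add]
    congr 1
    ring
  -- reduce the outer integral over the unique-coordinate pi measure to gumbelMeasure
  have hmeas : Measurable fun x : ℝ => ENNReal.ofReal (Real.exp (-(S * Real.exp (-x)))) := by
    exact ENNReal.measurable_ofReal.comp (by fun_prop)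
  trans (∫⁻ x, ENNReal.ofReal (Real.exp (-(S * Real.exp (-x)))) ∂gumbelMeasure)
  · refine Eq.trans (lintegral_congr fun f => hprod (f ⟨a₀, rfl⟩)) ?_
    exact lintegral_pi_point (X := {a : A // a = a₀}) (ft := Subtype.fintype fun a => a = a₀) ⟨a₀, rfl⟩ gumbelMeasure
      (fun x => ENNReal.ofReal (Real.exp (-(S * Real.exp (-x))))) hmeas
  trans (∫⁻ x, ENNReal.ofReal (Real.exp (-x - Real.exp (-x)))
      * ENNReal.ofReal (Real.exp (-(S * Real.exp (-x)))) ∂volume)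
  · have hdens : Measurable fun x : ℝ => ENNReal.ofReal (Real.exp (-x - Real.exp (-x))) :=
      ENNReal.measurable_ofReal.comp (by fun_prop)
    rw [gumbelMeasure, lintegral_withDensity_eq_lintegral_mul volume hdens hmeas]
    rfl
  trans (∫⁻ x, ENNReal.ofReal (Real.exp (-x - (1 + S) * Real.exp (-x))) ∂volume)
  · refine lintegral_congr fun x => ?_
    rw [← ENNReal.ofReal_mul (Real.exp_pos _).le, ← Real.exp_add]
    congr 2
    ring
  rw [gumbel_lintegral _ hcpos]
  congr 1
  have hsum : ∑ a : A, Real.exp (l a) = Real.exp (l a₀) * (1 + S) := by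
    have h1 : ∑ a : {a : A // ¬ a = a₀}, Real.exp (l a.1 - l a₀)
        = ∑ a ∈ Finset.univ.erase a₀, Real.exp (l a - l a₀) :=
      (Finset.sum_subtype (p := fun a : A => ¬ a = a₀) (Finset.univ.erase a₀)
        (fun x => by simp [Finset.mem_erase]) (fun a => Real.exp (l a - l a₀))).symm
    have h2 : Real.exp (l a₀) + ∑ a ∈ Finset.univ.erase a₀, Real.exp (l a)
        = ∑ a : A, Real.exp (l a) :=
      Finset.add_sum_erase Finset.univ (fun a => Real.exp (l a)) (Finset.mem_univ a₀)
    rw [mul_add, mul_one, hS, h1, Finset.mul_sum]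
    rw [← h2]
    congr 1
    refine Finset.sum_congr rfl fun a _ => ?_
    rw [Real.exp_sub, mul_div_cancel₀ _ (Real.exp_ne_zero _)]
  rw [hsum, div_mul_cancel_left₀ (Real.exp_ne_zero (l a₀)), one_div]
end
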